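/- arXiv:1006.3881 — 2 statements merged into one kernel-verified Lean document; each statement's English description precedes it below -/
import Mathlib

section
/- (Vitali Covering Theorem, interlaced form) Let X = [a,b] and E ⊆ X, and let H be a Vitali covering of E by closed subintervals of X (i.e., H contains ∅ and for every x ∈ E and ε > 0 there is I ∈ H with x ∈ I and 0 < length(I) < ε). Then there exists a sequence (I_j) of pairwise disjoint closed intervals from H such that for every n, E ⊆ (⋃_{j≤n} I_j) ∪ (⋃_{j>n} S(I_j)), where for an interval I with endpoints c ≤ d, S(I) = [c − 2·length(I), d + 2·length(I)] ∩ X and S(∅) = ∅. -/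
open scoped Classical

/-- The length of a bounded interval: `sSup I - sInf I` (junk value `0` for the
empty set). For a closed interval `[c,d]` with `c ≤ d` this is `d - c`. -/
noncomputable def ilen (I : Set ℝ) : ℝ := sSup I - sInf I

/-- The enlargement `S(I)` of a closed interval `I` with endpoints `c ≤ d`
inside `X = [a,b]`: `S(I) = [c − 2·len(I), d + 2·len(I)] ∩ [a,b]`, with
`S(∅) = ∅`. -/
noncomputable def ienlarge (a b : ℝ) (I : Set ℝ) : Set ℝ :=
  if I = ∅ then ∅
  else Set.Icc (sInf I - 2 * ilen I) (sSup I + 2 * ilen I) ∩ Set.Icc a b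

/-- Candidates at a stage: members of `H` of positive length disjoint from
all previously chosen intervals. -/
def candSet (H : Set (Set ℝ)) (L : List (Set ℝ)) : Set (Set ℝ) :=
  {J | J ∈ H ∧ 0 < ilen J ∧ ∀ K ∈ L, Disjoint J K}

/-- Greedy choice: an interval of more than half the supremal candidate
length, or `∅` if there is none. -/
noncomputable def stepH (H : Set (Set ℝ)) (L : List (Set ℝ)) : Set ℝ :=
  if h : ∃ J ∈ candSet H L, sSup (ilen '' candSet H L) / 2 < ilen J then h.choose else ∅

/-- The list of intervals chosen before stage `n`. -/
noncomputable def listSeq (H : Set (Set ℝ)) : ℕ → List (Set ℝ)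
  | 0 => []
  | n + 1 => listSeq H n ++ [stepH H (listSeq H n)]

/-- The sequence of chosen intervals. -/
noncomputable def seqI (H : Set (Set ℝ)) (n : ℕ) : Set ℝ := stepH H (listSeq H n)

lemma mem_listSeq (H : Set (Set ℝ)) (n : ℕ) (K : Set ℝ) :
    K ∈ listSeq H n ↔ ∃ j, j < n ∧ K = seqI H j := by
  induction n with
  | zero => simp [listSeq]
  | succ n ih =>
      simp only [listSeq, List.mem_append, List.mem_singleton, ih]
      constructor
      · rintro (⟨j, hj, rfl⟩ | rfl)
        · exact ⟨j, by omega, rfl⟩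
        · exact ⟨n, by omega, rfl⟩
      · rintro ⟨j, hj, rfl⟩
        rcases Nat.lt_succ_iff_lt_or_eq.1 hj with h | rfl
        · exact Or.inl ⟨j, h, rfl⟩
        · exact Or.inr rfl

lemma ilen_empty : ilen (∅ : Set ℝ) = 0 := by
  simp [ilen, Real.sSup_empty, Real.sInf_empty]

lemma seqI_cases (H : Set (Set ℝ)) (n : ℕ) :
    seqI H n ∈ candSet H (listSeq H n) ∨ seqI H n = ∅ := by
  rw [seqI, stepH]
  split_ifs with h
  · exact Or.inl h.choose_spec.1
  · exact Or.inr rfl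

section Main

variable {a b : ℝ} {H : Set (Set ℝ)}

/-- Shape of a positive-length member of `H`. -/
lemma shape (hHsub : ∀ I ∈ H, I = ∅ ∨ ∃ c d : ℝ, c ≤ d ∧ I = Set.Icc c d ∧ I ⊆ Set.Icc a b)
    {J : Set ℝ} (hJ : J ∈ H) (hpos : 0 < ilen J) :
    ∃ c d : ℝ, c < d ∧ J = Set.Icc c d ∧ a ≤ c ∧ d ≤ b ∧ sInf J = c ∧ sSup J = d ∧
      ilen J = d - c := by
  rcases hHsub J hJ with rfl | ⟨c, d, hcd, rfl, hsub⟩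
  · rw [ilen_empty] at hpos; linarith
  · have hinf : sInf (Set.Icc c d) = c := csInf_Icc hcd
    have hsup : sSup (Set.Icc c d) = d := csSup_Icc hcd
    have hlen : ilen (Set.Icc c d) = d - c := by rw [ilen, hinf, hsup]
    have hcd' : c < d := by rw [hlen] at hpos; linarith
    have h1 : a ≤ c ∧ d ≤ b := by
      have := (Set.Icc_subset_Icc_iff hcd).1 hsub
      exact this
    exact ⟨c, d, hcd', rfl, h1.1, h1.2, hinf, hsup, hlen⟩

/-- Key property of the greedy choice: if there is any candidate at stage `n`,
then `seqI H n` is a candidate and every candidate has length less than twice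
its length. -/
lemma key (hab : a ≤ b)
    (hHsub : ∀ I ∈ H, I = ∅ ∨ ∃ c d : ℝ, c ≤ d ∧ I = Set.Icc c d ∧ I ⊆ Set.Icc a b)
    (n : ℕ) {J : Set ℝ} (hJ : J ∈ candSet H (listSeq H n)) :
    seqI H n ∈ candSet H (listSeq H n) ∧ ilen J < 2 * ilen (seqI H n) := by
  set L := listSeq H n
  have hbdd : BddAbove (ilen '' candSet H L) := by
    refine ⟨b - a, ?_⟩
    rintro r ⟨K, hK, rfl⟩
    obtain ⟨c, d, hcd, -, hac, hdb, -, -, hlen⟩ := shape hHsub hK.1 hK.2.1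
    rw [hlen]; linarith
  have hle : ilen J ≤ sSup (ilen '' candSet H L) :=
    le_csSup hbdd ⟨J, hJ, rfl⟩
  have hpos : 0 < sSup (ilen '' candSet H L) := lt_of_lt_of_le hJ.2.1 hle
  obtain ⟨r, ⟨K, hK, rfl⟩, hr⟩ :=
    exists_lt_of_lt_csSup ⟨ilen J, Set.mem_image_of_mem ilen hJ⟩ (by linarith : sSup (ilen '' candSet H L) / 2 < sSup (ilen '' candSet H L))
  have hex : ∃ J ∈ candSet H L, sSup (ilen '' candSet H L) / 2 < ilen J := ⟨K, hK, hr⟩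
  have hstep : seqI H n = hex.choose := by rw [seqI, stepH, dif_pos hex]
  obtain ⟨h1, h2⟩ := hex.choose_spec
  rw [hstep]
  exact ⟨h1, by linarith⟩

lemma seqI_disjoint (i j : ℕ) (hij : i < j) : Disjoint (seqI H i) (seqI H j) := by
  rcases seqI_cases H j with h | h
  · exact (h.2.2 (seqI H i) ((mem_listSeq H j _).2 ⟨i, hij, rfl⟩)).symm
  · rw [h]; exact Set.disjoint_empty _

end Main

/-- Vitali covering theorem, interlaced form: if `H` is a Vitali
covering of `E ⊆ [a,b]` by closed subintervals of `[a,b]`, then there is a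
sequence of pairwise disjoint intervals `I_j ∈ H` such that for every `n`,
`E ⊆ (⋃_{j≤n} I_j) ∪ (⋃_{j>n} S(I_j))`. -/
theorem vitali_interlaced_cover (a b : ℝ) (hab : a ≤ b)
    (E : Set ℝ) (hE : E ⊆ Set.Icc a b) (H : Set (Set ℝ))
    (hHsub : ∀ I ∈ H, I = ∅ ∨ ∃ c d : ℝ, c ≤ d ∧ I = Set.Icc c d ∧ I ⊆ Set.Icc a b)
    (hHempty : ∅ ∈ H)
    (hVitali : ∀ x ∈ E, ∀ ε : ℝ, 0 < ε →
      ∃ I ∈ H, x ∈ I ∧ 0 < ilen I ∧ ilen I < ε) :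
    ∃ I : ℕ → Set ℝ, (∀ j, I j ∈ H) ∧ Pairwise (Function.onFun Disjoint I) ∧
      ∀ n : ℕ, E ⊆ (⋃ (j) (_ : j ≤ n), I j) ∪ ⋃ (j) (_ : n < j), ienlarge a b (I j) := by
  refine ⟨seqI H, ?_, ?_, ?_⟩
  · intro j
    rcases seqI_cases H j with h | h
    · exact h.1
    · rw [h]; exact hHempty
  · intro i j hij
    rcases lt_or_gt_of_ne hij with h | h
    · exact seqI_disjoint i j h
    · exact (seqI_disjoint j i h).symm
  · intro n x hx
    by_cases hxin : x ∈ ⋃ (j) (_ : j ≤ n), seqI H j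
    · exact Or.inl hxin
    right
    -- the finite union of chosen intervals up to n is closed
    have hclosed : IsClosed (⋃ (j) (_ : j ≤ n), seqI H j) := by
      have : (⋃ (j) (_ : j ≤ n), seqI H j) = ⋃ j ∈ Set.Iic n, seqI H j := by
        simp [Set.Iic]
      rw [this]
      refine (Set.finite_Iic n).isClosed_biUnion ?_
      intro j _
      rcases seqI_cases H j with h | h
      · obtain ⟨c, d, -, hEq, -⟩ := shape hHsub h.1 h.2.1
        rw [hEq]; exact isClosed_Icc
      · rw [h]; exact isClosed_empty
    obtain ⟨ε, hε, hball⟩ := Metric.isOpen_iff.1 hclosed.isOpen_compl x hxin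
    obtain ⟨J, hJH, hxJ, hJpos, hJlt⟩ := hVitali x hx ε hε
    obtain ⟨c, d, hcd, hJEq, hac, hdb, hinfJ, hsupJ, hlenJ⟩ := shape hHsub hJH hJpos
    -- J is disjoint from the first n+1 chosen intervals
    have hJsmall : ∀ y ∈ J, y ∉ ⋃ (j) (_ : j ≤ n), seqI H j := by
      intro y hy
      apply hball
      rw [hJEq] at hxJ hy
      rw [Metric.mem_ball, Real.dist_eq]
      rw [abs_sub_lt_iff]
      constructor
      · have := hxJ.1; have := hy.2; rw [hlenJ] at hJlt; linarith
      · have := hxJ.2; have := hy.1; rw [hlenJ] at hJlt; linarith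
    have hJdisj : ∀ j ≤ n, Disjoint J (seqI H j) := by
      intro j hj
      rw [Set.disjoint_left]
      intro y hyJ hyI
      exact hJsmall y hyJ (Set.mem_iUnion₂.2 ⟨j, hj, hyI⟩)
    by_cases hmeet : ∃ k, n < k ∧ (J ∩ seqI H k).Nonempty
    · -- least such k
      set k := Nat.find hmeet with hk
      obtain ⟨hnk, y, hyJ, hyI⟩ := Nat.find_spec hmeet
      have hJcand : J ∈ candSet H (listSeq H k) := by
        refine ⟨hJH, hJpos, ?_⟩
        intro K hK
        obtain ⟨m, hmk, rfl⟩ := (mem_listSeq H k K).1 hK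
        by_cases hmn : m ≤ n
        · exact hJdisj m hmn
        · have := Nat.find_min hmeet hmk
          push_neg at this
          rw [Set.disjoint_iff_inter_eq_empty]
          exact this (by omega)
      obtain ⟨hIk, hlt⟩ := key hab hHsub k hJcand
      obtain ⟨c', d', hcd', hIkEq, hac', hdb', hinf', hsup', hlen'⟩ :=
        shape hHsub hIk.1 hIk.2.1
      refine Set.mem_iUnion₂.2 ⟨k, hnk, ?_⟩
      rw [ienlarge, if_neg (by rw [hIkEq]; exact (Set.nonempty_Icc.2 hcd'.le).ne_empty)]
      rw [hinf', hsup', hlen']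
      refine ⟨?_, hE hx⟩
      rw [hJEq] at hxJ hyJ
      rw [hIkEq] at hyI
      rw [hlenJ] at hlt
      rw [Set.mem_Icc]
      constructor <;> linarith [hxJ.1, hxJ.2, hyJ.1, hyJ.2, hyI.1, hyI.2]
    · -- J disjoint from all: measure-theoretic contradiction
      exfalso
      push_neg at hmeet
      have hJall : ∀ m, Disjoint J (seqI H m) := by
        intro m
        by_cases hmn : m ≤ n
        · exact hJdisj m hmn
        · rw [Set.disjoint_iff_inter_eq_empty]
          exact hmeet m (by omega)
      have hJcand : ∀ m, J ∈ candSet H (listSeq H m) := by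
        intro m
        refine ⟨hJH, hJpos, ?_⟩
        intro K hK
        obtain ⟨j, hj, rfl⟩ := (mem_listSeq H m K).1 hK
        exact hJall j
      have hbig : ∀ m, ENNReal.ofReal (ilen J / 2) ≤ MeasureTheory.volume (seqI H m) := by
        intro m
        obtain ⟨hIm, hlt⟩ := key hab hHsub m (hJcand m)
        obtain ⟨c', d', hcd', hEq', -, -, -, -, hlen'⟩ := shape hHsub hIm.1 hIm.2.1
        rw [hEq', Real.volume_Icc]
        exact ENNReal.ofReal_le_ofReal (by rw [hlen'] at hlt; linarith)
      have hmeas : ∀ m, MeasurableSet (seqI H m) := by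
        intro m
        rcases seqI_cases H m with h | h
        · obtain ⟨c', d', -, hEq', -⟩ := shape hHsub h.1 h.2.1
          rw [hEq']; exact measurableSet_Icc
        · rw [h]; exact MeasurableSet.empty
      have hdisj : Pairwise (Function.onFun Disjoint (seqI H)) := by
        intro i j hij
        rcases lt_or_gt_of_ne hij with h | h
        · exact seqI_disjoint i j h
        · exact (seqI_disjoint j i h).symm
      have hsum : MeasureTheory.volume (⋃ m, seqI H m) = ∑' m, MeasureTheory.volume (seqI H m) :=
        MeasureTheory.measure_iUnion hdisj hmeas
      have hsub' : (⋃ m, seqI H m) ⊆ Set.Icc a b := by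
        refine Set.iUnion_subset fun m => ?_
        rcases hHsub (seqI H m) (by
          rcases seqI_cases H m with h | h
          · exact h.1
          · rw [h]; exact hHempty) with h | ⟨c', d', -, -, hsub⟩
        · rw [h]; exact Set.empty_subset _
        · exact hsub
      have hfin : MeasureTheory.volume (⋃ m, seqI H m) ≤ ENNReal.ofReal (b - a) := by
        calc MeasureTheory.volume (⋃ m, seqI H m) ≤ MeasureTheory.volume (Set.Icc a b) :=
              MeasureTheory.measure_mono hsub'
          _ = ENNReal.ofReal (b - a) := Real.volume_Icc
      have htop : (∑' _ : ℕ, ENNReal.ofReal (ilen J / 2)) = ⊤ :=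
        ENNReal.tsum_const_eq_top_of_ne_zero (by
          simp only [ne_eq, ENNReal.ofReal_eq_zero, not_le]
          linarith)
      have : (⊤ : ENNReal) ≤ ENNReal.ofReal (b - a) := by
        calc (⊤ : ENNReal) = ∑' _ : ℕ, ENNReal.ofReal (ilen J / 2) := htop.symm
          _ ≤ ∑' m, MeasureTheory.volume (seqI H m) := ENNReal.tsum_le_tsum hbig
          _ = MeasureTheory.volume (⋃ m, seqI H m) := hsum.symm
          _ ≤ ENNReal.ofReal (b - a) := hfin
      exact ENNReal.ofReal_lt_top.not_ge this
end

section
/- (Fubini's theorem on differentiation of series) Let h_n be a sequence of increasing (nondecreasing) real functions on a closed bounded interval X = [a,b] such that the series Σ_n h_n(x) converges to a finite value h(x) for every x ∈ X. Then there is a Lebesgue null set D such that h is differentiable at every x ∈ X \ D and Σ_n h_n'(x) = h'(x) for all x ∈ X \ D. -/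
open MeasureTheory Filter Set Topology

/-- The derivative of a monotone function is nonnegative where it exists. -/
lemma monotone_hasDerivAt_nonneg' {g : ℝ → ℝ} (hg : Monotone g) {c x : ℝ}
    (h : HasDerivAt g c x) : 0 ≤ c := by
  rw [hasDerivAt_iff_tendsto_slope] at h
  refine ge_of_tendsto h ?_
  filter_upwards [self_mem_nhdsWithin] with y hy
  rcases lt_or_gt_of_ne (hy : y ≠ x) with h' | h'
  · rw [slope_def_field]
    exact div_nonneg_of_nonpos (sub_nonpos.2 (hg h'.le)) (sub_nonpos.2 h'.le)
  · rw [slope_def_field]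
    exact div_nonneg (sub_nonneg.2 (hg h'.le)) (sub_nonneg.2 h'.le)

/-- A monotone function has, a.e., a derivative equal to `deriv`. -/
lemma monotone_ae_hasDerivAt_deriv {g : ℝ → ℝ} (hg : Monotone g) :
    ∀ᵐ x, HasDerivAt g (deriv g x) x :=
  hg.ae_hasDerivAt.mono fun x hx => by rw [hx.deriv]; exact hx

/-- Tails of a pointwise convergent series of monotone functions are monotone. -/
lemma tail_monotone {f : ℕ → ℝ → ℝ} {F : ℝ → ℝ} (hf : ∀ n, Monotone (f n))
    (hF : ∀ x, HasSum (fun n => f n x) (F x)) (N : ℕ) :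
    Monotone (fun x => F x - ∑ n ∈ Finset.range N, f n x) := by
  intro x y hxy
  have h1 : HasSum (fun n => f n y - f n x) (F y - F x) := (hF y).sub (hF x)
  have h2 : ∑ n ∈ Finset.range N, (f n y - f n x) ≤ F y - F x :=
    sum_le_hasSum _ (fun n _ => sub_nonneg.2 (hf n hxy)) h1
  rw [Finset.sum_sub_distrib] at h2
  simp only []
  linarith

/-- Core a.e. statement: all the functions and the sum are differentiable and the
partial sums of derivatives are bounded by the derivative of the sum. -/
lemma fubini_core {f : ℕ → ℝ → ℝ} {F : ℝ → ℝ} (hf : ∀ n, Monotone (f n))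
    (hF : ∀ x, HasSum (fun n => f n x) (F x)) :
    ∀ᵐ x, (∀ n, HasDerivAt (f n) (deriv (f n) x) x) ∧ HasDerivAt F (deriv F x) x ∧
      ∀ N, ∑ n ∈ Finset.range N, deriv (f n) x ≤ deriv F x := by
  have hFmono : Monotone F := by simpa using tail_monotone hf hF 0
  filter_upwards [ae_all_iff.2 fun n => monotone_ae_hasDerivAt_deriv (hf n),
    monotone_ae_hasDerivAt_deriv hFmono,
    ae_all_iff.2 fun N => monotone_ae_hasDerivAt_deriv (tail_monotone hf hF N)]
    with x h1 h2 h3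
  refine ⟨h1, h2, fun N => ?_⟩
  have hp : HasDerivAt (fun y => ∑ n ∈ Finset.range N, f n y)
      (∑ n ∈ Finset.range N, deriv (f n) x) x := HasDerivAt.fun_sum fun n _ => h1 n
  have hT := h3 N
  have hnn : 0 ≤ deriv (fun x => F x - ∑ n ∈ Finset.range N, f n x) x :=
    monotone_hasDerivAt_nonneg' (tail_monotone hf hF N) hT
  have hFd : HasDerivAt F
      (deriv (fun x => F x - ∑ n ∈ Finset.range N, f n x) x
        + ∑ n ∈ Finset.range N, deriv (f n) x) x := by
    simpa using hT.fun_add hp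
  have := h2.unique hFd
  linarith

/-- Fubini's differentiation theorem, global version for monotone nonnegative
functions that attain their maximum at `b`. -/
lemma fubini_main {f : ℕ → ℝ → ℝ} {F : ℝ → ℝ} {b : ℝ} (hf : ∀ n, Monotone (f n))
    (hF : ∀ x, HasSum (fun n => f n x) (F x))
    (hnn : ∀ n x, 0 ≤ f n x) (hb : ∀ n x, f n x ≤ f n b) :
    ∀ᵐ x, (∀ n, HasDerivAt (f n) (deriv (f n) x) x) ∧ HasDerivAt F (deriv F x) x ∧
      HasSum (fun n => deriv (f n) x) (deriv F x) := by
  -- choose truncation points with small tails at b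
  have hchoice : ∀ k : ℕ, ∃ N, F b - ∑ n ∈ Finset.range N, f n b ≤ (1/2 : ℝ)^k := by
    intro k
    have ht : Tendsto (fun N => F b - ∑ n ∈ Finset.range N, f n b) atTop (𝓝 0) := by
      have := ((hF b).tendsto_sum_nat).const_sub (F b)
      simpa using this
    have hpos : (0:ℝ) < (1/2)^k := by positivity
    obtain ⟨N, hN⟩ := (ht.eventually_mem (Iio_mem_nhds hpos)).exists
    exact ⟨N, le_of_lt hN⟩
  choose N hN using hchoice
  set g : ℕ → ℝ → ℝ := fun k x => F x - ∑ n ∈ Finset.range (N k), f n x with hgdef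
  have hgmono : ∀ k, Monotone (g k) := fun k => tail_monotone hf hF (N k)
  have hgtail : ∀ k x, HasSum (fun n => f (n + N k) x) (g k x) := by
    intro k x
    refine (hasSum_nat_add_iff (f := fun n => f n x) (N k)).2 ?_
    simpa [hgdef] using hF x
  have hg0 : ∀ k x, 0 ≤ g k x := fun k x => (hgtail k x).nonneg fun n => hnn _ x
  have hgbd : ∀ k x, g k x ≤ (1/2 : ℝ)^k := fun k x =>
    (hasSum_le (fun n => hb _ x) (hgtail k x) (hgtail k b)).trans (hN k)
  have hGsummable : ∀ x, Summable fun k => g k x := fun x =>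
    Summable.of_nonneg_of_le (fun k => hg0 k x) (fun k => hgbd k x)
      (summable_geometric_of_lt_one (by norm_num) (by norm_num))
  set G : ℝ → ℝ := fun x => ∑' k, g k x with hGdef
  have hG : ∀ x, HasSum (fun k => g k x) (G x) := fun x => (hGsummable x).hasSum
  filter_upwards [fubini_core hf hF, fubini_core hgmono hG] with x hx hgx
  obtain ⟨h1, h2, h3⟩ := hx
  obtain ⟨k1, k2, k3⟩ := hgx
  refine ⟨h1, h2, ?_⟩
  have hd0 : ∀ n, 0 ≤ deriv (f n) x := fun n =>
    monotone_hasDerivAt_nonneg' (hf n) (h1 n)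
  have hgd : ∀ k, deriv (g k) x
      = deriv F x - ∑ n ∈ Finset.range (N k), deriv (f n) x := by
    intro k
    have hp : HasDerivAt (fun y => ∑ n ∈ Finset.range (N k), f n y)
        (∑ n ∈ Finset.range (N k), deriv (f n) x) x := HasDerivAt.fun_sum fun n _ => h1 n
    exact (k1 k).unique (h2.sub hp)
  have hdg0 : ∀ k, 0 ≤ deriv (g k) x := fun k =>
    monotone_hasDerivAt_nonneg' (hgmono k) (k1 k)
  have hsumg : Summable fun k => deriv (g k) x :=
    summable_of_sum_range_le hdg0 fun K => k3 K
  have hzero : Tendsto (fun k => deriv (g k) x) atTop (𝓝 0) :=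
    hsumg.tendsto_atTop_zero
  have hlim : Tendsto (fun k => ∑ n ∈ Finset.range (N k), deriv (f n) x) atTop
      (𝓝 (deriv F x)) := by
    have heq : (fun k => ∑ n ∈ Finset.range (N k), deriv (f n) x)
        = fun k => deriv F x - deriv (g k) x := by
      funext k; rw [hgd k]; ring
    rw [heq]
    simpa using tendsto_const_nhds.sub hzero
  have hsf : Summable fun n => deriv (f n) x := summable_of_sum_range_le hd0 h3
  have h4 : ∑' n, deriv (f n) x ≤ deriv F x := Summable.tsum_le_of_sum_range_le hsf h3
  have h5 : deriv F x ≤ ∑' n, deriv (f n) x :=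
    le_of_tendsto hlim (Eventually.of_forall fun k =>
      Summable.sum_le_tsum _ (fun n _ => hd0 n) hsf)
  have : ∑' n, deriv (f n) x = deriv F x := le_antisymm h4 h5
  exact this ▸ hsf.hasSum



/-- Fubini's theorem on differentiation of series of monotone
functions: if `h n` are nondecreasing functions on `[a,b]` and the series
`Σ_n h n x` converges to `H x` for every `x ∈ [a,b]`, then there is a Lebesgue
null set `D` such that at every `x ∈ [a,b] \ D` all the derivatives `(h n)'(x)`
and `H'(x)` exist and `Σ_n (h n)'(x) = H'(x)`. -/
theorem fubini_differentiation_of_series (a b : ℝ) (hab : a ≤ b)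
    (h : ℕ → ℝ → ℝ) (H : ℝ → ℝ)
    (hmono : ∀ n, MonotoneOn (h n) (Set.Icc a b))
    (hsum : ∀ x ∈ Set.Icc a b, HasSum (fun n => h n x) (H x)) :
    ∃ D : Set ℝ, MeasureTheory.volume D = 0 ∧
      ∀ x ∈ Set.Icc a b \ D, ∃ (d : ℕ → ℝ) (s : ℝ),
        (∀ n, HasDerivWithinAt (h n) (d n) (Set.Icc a b) x) ∧
        HasDerivWithinAt H s (Set.Icc a b) x ∧ HasSum d s := by
  classical
  set c : ℝ → ℝ := fun x => max a (min b x) with hcdef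
  have hcmem : ∀ x, c x ∈ Set.Icc a b :=
    fun x => ⟨le_max_left _ _, max_le hab (min_le_left _ _)⟩
  have hcmono : Monotone c := fun x y hxy =>
    max_le_max le_rfl (min_le_min le_rfl hxy)
  have hca : c a = a := by simp [hcdef, min_eq_right hab]  -- min b a = a? careful
  have hcb : c b = b := by simp [hcdef, hab]
  have hamem : a ∈ Set.Icc a b := ⟨le_rfl, hab⟩
  set f : ℕ → ℝ → ℝ := fun n x => h n (c x) - h n a with hfdef
  set F : ℝ → ℝ := fun x => H (c x) - H a with hFdef
  have hfmono : ∀ n, Monotone (f n) := fun n x y hxy =>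
    sub_le_sub_right ((hmono n) (hcmem x) (hcmem y) (hcmono hxy)) _
  have hfs : ∀ x, HasSum (fun n => f n x) (F x) := fun x =>
    (hsum (c x) (hcmem x)).sub (hsum a hamem)
  have hfnn : ∀ n x, 0 ≤ f n x := fun n x =>
    sub_nonneg.2 ((hmono n) hamem (hcmem x) (hcmem x).1)
  have hfb : ∀ n x, f n x ≤ f n b := fun n x => by
    have : h n (c x) ≤ h n (c b) :=
      (hmono n) (hcmem x) (hcmem b) (by rw [hcb]; exact (hcmem x).2)
    exact sub_le_sub_right this _
  have hmain := fubini_main hfmono hfs hfnn hfb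
  rw [MeasureTheory.ae_iff] at hmain
  refine ⟨{x | ¬((∀ n, HasDerivAt (f n) (deriv (f n) x) x) ∧ HasDerivAt F (deriv F x) x ∧
      HasSum (fun n => deriv (f n) x) (deriv F x))} ∪ {a, b}, ?_, ?_⟩
  · exact measure_union_null hmain (((Set.finite_singleton b).insert a).measure_zero _)
  · rintro x ⟨hxI, hxD⟩
    rw [Set.mem_union, not_or] at hxD
    obtain ⟨hxP, hxab⟩ := hxD
    rw [Set.mem_setOf_eq, not_not] at hxP
    obtain ⟨h1, h2, h3⟩ := hxP
    have hxa : x ≠ a := fun hx => hxab (by simp [hx])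
    have hxb : x ≠ b := fun hx => hxab (by simp [hx])
    have hxoo : x ∈ Set.Ioo a b := ⟨lt_of_le_of_ne hxI.1 (Ne.symm hxa), lt_of_le_of_ne hxI.2 hxb⟩
    have hnb : Set.Ioo a b ∈ 𝓝 x := isOpen_Ioo.mem_nhds hxoo
    have hceq : ∀ y ∈ Set.Ioo a b, c y = y := fun y hy => by
      simp [hcdef, min_eq_right hy.2.le, max_eq_right hy.1.le]
    refine ⟨fun n => deriv (f n) x, deriv F x, fun n => ?_, ?_, h3⟩
    · have heq : (fun y => h n y - h n a) =ᶠ[𝓝 x] f n :=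
        eventually_of_mem hnb fun y hy => by simp [hfdef, hceq y hy]
      have hd : HasDerivAt (fun y => h n y - h n a) (deriv (f n) x) x :=
        (h1 n).congr_of_eventuallyEq heq
      have hd2 : HasDerivAt (h n) (deriv (f n) x) x := by
        simpa using hd.add_const (h n a)
      exact hd2.hasDerivWithinAt
    · have heq : (fun y => H y - H a) =ᶠ[𝓝 x] F :=
        eventually_of_mem hnb fun y hy => by simp [hFdef, hceq y hy]
      have hd : HasDerivAt (fun y => H y - H a) (deriv F x) x :=
        h2.congr_of_eventuallyEq heq
      have hd2 : HasDerivAt H (deriv F x) x := by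
        simpa using hd.add_const (H a)
      exact hd2.hasDerivWithinAt
end
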